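/- Every injective sequence in a group has a proper subsequence, i.e., a subsequence $(b_n)$ such that for all finite index sets $F_1 < F_2$ (every element of $F_1$ less than every element of $F_2$), we have $b_{F_1} \neq b_{F_2}$. -/

import Mathlib

/-- The ordered sum `a_{i_1} + ⋯ + a_{i_m}` over a finite index set
`F = {i_1 < ⋯ < i_m}` (junk value `a 0` if `F = ∅`). -/
def ordsum {S : Type*} [AddSemigroup S] (a : ℕ → S) (F : Finset ℕ) : S :=
  match F.sort (· ≤ ·) with
  | [] => a 0
  | i :: l => l.foldl (fun s j => s + a j) (a i)

/-- `F < G`: every element of `F` is smaller than every element of `G`. -/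
def FinsetLT (F G : Finset ℕ) : Prop := ∀ i ∈ F, ∀ j ∈ G, i < j

/-- `FS(a_1, a_2, …)`: the set of all finite ordered sums of the sequence `a`. -/
def FSset {S : Type*} [AddSemigroup S] (a : ℕ → S) : Set S :=
  {s | ∃ F : Finset ℕ, F.Nonempty ∧ ordsum a F = s}

/-- `FS(a_n, a_{n+1}, …)`: finite ordered sums with all indices `≥ n`. -/
def FStail {S : Type*} [AddSemigroup S] (a : ℕ → S) (n : ℕ) : Set S :=
  {s | ∃ F : Finset ℕ, F.Nonempty ∧ (∀ i ∈ F, n ≤ i) ∧ ordsum a F = s}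

/-- A sequence is proper if `a_{F₁} ≠ a_{F₂}` whenever `F₁ < F₂`. -/
def IsProperSeq {S : Type*} [AddSemigroup S] (a : ℕ → S) : Prop :=
  ∀ F G : Finset ℕ, F.Nonempty → G.Nonempty → FinsetLT F G →
    ordsum a F ≠ ordsum a G

/-- `b` is a sumsequence of `a`: `b_k = a_{F_k}` for finite index sets `F₁ < F₂ < ⋯`. -/
def IsSumseq {S : Type*} [AddSemigroup S] (a b : ℕ → S) : Prop :=
  ∃ F : ℕ → Finset ℕ, (∀ k, (F k).Nonempty) ∧
    (∀ k, FinsetLT (F k) (F (k + 1))) ∧ (∀ k, b k = ordsum a (F k))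


section Aux

variable {S : Type*} [AddSemigroup S]

lemma ordsum_eq_of_sort (f : ℕ → S) {F : Finset ℕ} {i : ℕ} {l : List ℕ}
    (h : F.sort (· ≤ ·) = i :: l) :
    ordsum f F = l.foldl (fun s j => s + f j) (f i) := by
  rw [ordsum, h]

lemma foldl_congr (f g : ℕ → S) (l : List ℕ) (x : S) (h : ∀ i ∈ l, f i = g i) :
    l.foldl (fun s j => s + f j) x = l.foldl (fun s j => s + g j) x := by
  induction l generalizing x with
  | nil => rfl
  | cons i l ih =>
      simp only [List.foldl_cons]
      rw [h i (by simp)]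
      exact ih _ fun j hj => h j (by simp [hj])

lemma ordsum_congr (f g : ℕ → S) {F : Finset ℕ} (hF : F.Nonempty)
    (h : ∀ i ∈ F, f i = g i) : ordsum f F = ordsum g F := by
  obtain ⟨i, l, hl⟩ : ∃ i lx, F.sort (· ≤ ·) = i :: lx := by
    rcases hs : F.sort (· ≤ ·) with _ | ⟨i, l⟩
    · exfalso
      obtain ⟨x, hx⟩ := hF
      have := (Finset.mem_sort (· ≤ ·)).mpr hx
      rw [hs] at this
      simp at this
    · exact ⟨i, l, rfl⟩
  have hi : i ∈ F := by rw [← Finset.mem_sort (· ≤ ·), hl]; simp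
  rw [ordsum_eq_of_sort f hl, ordsum_eq_of_sort g hl, h i hi]
  exact foldl_congr f g l _ fun j hj => h j (by rw [← Finset.mem_sort (· ≤ ·), hl]; simp [hj])

lemma ordsum_singleton (f : ℕ → S) (M : ℕ) : ordsum f {M} = f M := by
  rw [ordsum_eq_of_sort f (i := M) (l := []) (Finset.sort_singleton _ M)]
  rfl

lemma sort_insert_max {s : Finset ℕ} {M : ℕ} (hM : M ∉ s) (h : ∀ i ∈ s, i ≤ M) :
    (insert M s).sort (· ≤ ·) = s.sort (· ≤ ·) ++ [M] := by
  refine (fun h1 h2 h3 => List.Perm.eq_of_pairwise' (r := (· ≤ ·)) h2 h3 h1) ?_ ?_ ?_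
  · rw [← Multiset.coe_eq_coe, Finset.sort_eq, Finset.insert_val_of_notMem hM]
    have h2 : ((s.sort (· ≤ ·) ++ [M] : List ℕ) : Multiset ℕ)
        = ((s.sort (· ≤ ·) : List ℕ) : Multiset ℕ) + (([M] : List ℕ) : Multiset ℕ) := rfl
    rw [h2, Finset.sort_eq, add_comm]
    rfl
  · exact Finset.pairwise_sort _ _
  · rw [List.pairwise_append]
    refine ⟨Finset.pairwise_sort _ _, by simp, ?_⟩
    intro x hx y hy
    simp only [List.mem_singleton] at hy
    subst hy
    exact h x (by rwa [← Finset.mem_sort (· ≤ ·)])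

lemma ordsum_insert_max (f : ℕ → S) {s : Finset ℕ} {M : ℕ} (hs : s.Nonempty)
    (hM : M ∉ s) (h : ∀ i ∈ s, i ≤ M) :
    ordsum f (insert M s) = ordsum f s + f M := by
  obtain ⟨i, l, hl⟩ : ∃ i lx, s.sort (· ≤ ·) = i :: lx := by
    rcases hx : s.sort (· ≤ ·) with _ | ⟨i0, l0⟩
    · exfalso
      obtain ⟨x, hxs⟩ := hs
      have := (Finset.mem_sort (· ≤ ·)).mpr hxs
      rw [hx] at this
      simp at this
    · exact ⟨i0, l0, rfl⟩
  have hins : (insert M s).sort (· ≤ ·) = i :: (l ++ [M]) := by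
    rw [sort_insert_max hM h, hl]; rfl
  rw [ordsum_eq_of_sort f hins, ordsum_eq_of_sort f hl, List.foldl_append]
  rfl

end Aux

section Construction

variable {G : Type*} [AddGroup G]

/-- The finite set of "bad" values at a given stage, determined by the list of
previously chosen indices. -/
noncomputable def badSet (a : ℕ → G) (l : List ℕ) : Finset G :=
  letI := Classical.decEq G
  (((Finset.range l.length).powerset.filter (·.Nonempty)).image
      (ordsum (fun i => a (l.getD i 0)))) ∪
    ((((Finset.range l.length).powerset.filter (·.Nonempty)) ×ˢ
        ((Finset.range l.length).powerset.filter (·.Nonempty))).image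
      (fun p => -(ordsum (fun i => a (l.getD i 0)) p.1) +
        ordsum (fun i => a (l.getD i 0)) p.2))

lemma exists_step (a : ℕ → G) (ha : Function.Injective a) (l : List ℕ) :
    ∃ m, (∀ x ∈ l, x < m) ∧ a m ∉ badSet a l := by
  have hfin : (a ⁻¹' (badSet a l : Set G)).Finite :=
    Set.Finite.preimage ha.injOn (Finset.finite_toSet _)
  have hinf : (a ⁻¹' (badSet a l : Set G))ᶜ.Infinite := hfin.infinite_compl
  obtain ⟨m, hm, hml⟩ := hinf.exists_gt (l.foldr max 0)
  refine ⟨m, ?_, hm⟩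
  intro x hx
  refine lt_of_le_of_lt ?_ hml
  clear hm hml hinf hfin
  induction l with
  | nil => simp at hx
  | cons y l ih =>
      rcases List.mem_cons.mp hx with h | h
      · subst h; exact le_max_left _ _
      · exact le_trans (ih h) (le_max_right _ _)

/-- The list of chosen indices after `k` steps. -/
noncomputable def chain (a : ℕ → G) (ha : Function.Injective a) : ℕ → List ℕ
  | 0 => []
  | k + 1 =>
      chain a ha k ++ [(exists_step a ha (chain a ha k)).choose]

/-- The chosen subsequence indices. -/
noncomputable def phi (a : ℕ → G) (ha : Function.Injective a) (k : ℕ) : ℕ :=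
  (exists_step a ha (chain a ha k)).choose

lemma chain_succ (a : ℕ → G) (ha : Function.Injective a) (k : ℕ) :
    chain a ha (k + 1) = chain a ha k ++ [phi a ha k] := rfl

lemma chain_length (a : ℕ → G) (ha : Function.Injective a) (k : ℕ) :
    (chain a ha k).length = k := by
  induction k with
  | zero => rfl
  | succ k ih => rw [chain_succ, List.length_append, ih]; rfl

lemma chain_getD (a : ℕ → G) (ha : Function.Injective a) {i k : ℕ} (h : i < k) :
    (chain a ha k).getD i 0 = phi a ha i := by
  induction k with
  | zero => omega
  | succ k ih =>
      rw [chain_succ]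
      rcases Nat.lt_or_ge i k with h' | h'
      · rw [List.getD_append _ _ _ _ (by rw [chain_length]; exact h')]
        exact ih h'
      · have hik : i = k := by omega
        subst hik
        rw [List.getD_eq_getElem?_getD, List.getElem?_append_right (by rw [chain_length])]
        simp [chain_length]

lemma phi_spec (a : ℕ → G) (ha : Function.Injective a) (k : ℕ) :
    (∀ x ∈ chain a ha k, x < phi a ha k) ∧ a (phi a ha k) ∉ badSet a (chain a ha k) :=
  (exists_step a ha (chain a ha k)).choose_spec

lemma phi_strictMono (a : ℕ → G) (ha : Function.Injective a) :
    StrictMono (phi a ha) := by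
  apply strictMono_nat_of_lt_succ
  intro k
  exact (phi_spec a ha (k + 1)).1 _ (by rw [chain_succ]; simp)

lemma ordsum_chain (a : ℕ → G) (ha : Function.Injective a) {F : Finset ℕ} {k : ℕ}
    (hF : F.Nonempty) (hk : ∀ i ∈ F, i < k) :
    ordsum (a ∘ phi a ha) F = ordsum (fun i => a ((chain a ha k).getD i 0)) F :=
  ordsum_congr _ _ hF fun i hi => by
    simp only [Function.comp_apply]
    rw [chain_getD a ha (hk i hi)]

lemma mem_badSet_left (a : ℕ → G) (ha : Function.Injective a) {F : Finset ℕ} {k : ℕ}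
    (hF : F.Nonempty) (hk : ∀ i ∈ F, i < k) :
    ordsum (a ∘ phi a ha) F ∈ badSet a (chain a ha k) := by
  classical
  rw [ordsum_chain a ha hF hk]
  unfold badSet
  apply Finset.mem_union_left
  apply Finset.mem_image_of_mem
  simp only [Finset.mem_filter, Finset.mem_powerset, chain_length]
  exact ⟨fun i hi => Finset.mem_range.mpr (hk i hi), hF⟩

lemma mem_badSet_right (a : ℕ → G) (ha : Function.Injective a) {F H : Finset ℕ} {k : ℕ}
    (hF : F.Nonempty) (hkF : ∀ i ∈ F, i < k) (hH : H.Nonempty) (hkH : ∀ i ∈ H, i < k) :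
    -(ordsum (a ∘ phi a ha) H) + ordsum (a ∘ phi a ha) F ∈ badSet a (chain a ha k) := by
  classical
  rw [ordsum_chain a ha hF hkF, ordsum_chain a ha hH hkH]
  unfold badSet
  apply Finset.mem_union_right
  refine Finset.mem_image.mpr ⟨(H, F), ?_, rfl⟩
  simp only [Finset.mem_product, Finset.mem_filter, Finset.mem_powerset, chain_length]
  exact ⟨⟨fun i hi => Finset.mem_range.mpr (hkH i hi), hH⟩,
    ⟨fun i hi => Finset.mem_range.mpr (hkF i hi), hF⟩⟩

end Construction

theorem stmt2 {G : Type*} [AddGroup G] (a : ℕ → G) (ha : Function.Injective a) :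
    ∃ φ : ℕ → ℕ, StrictMono φ ∧ IsProperSeq (a ∘ φ) := by
  refine ⟨phi a ha, phi_strictMono a ha, ?_⟩
  intro F Gs hF hG hlt heq
  set b := a ∘ phi a ha with hb
  set M := Gs.max' hG with hM
  have hMmem : M ∈ Gs := Gs.max'_mem hG
  have hFM : ∀ i ∈ F, i < M := fun i hi => hlt i hi M hMmem
  have hbad : a (phi a ha M) ∉ badSet a (chain a ha M) := (phi_spec a ha M).2
  have hbM : b M = a (phi a ha M) := rfl
  rcases (Gs.erase M).eq_empty_or_nonempty with he | he
  · have hGs : Gs = {M} := by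
      apply Finset.eq_singleton_iff_unique_mem.mpr
      refine ⟨hMmem, fun x hx => ?_⟩
      by_contra hne
      exact (Finset.notMem_empty x) (he ▸ Finset.mem_erase.mpr ⟨hne, hx⟩)
    rw [hGs, ordsum_singleton] at heq
    apply hbad
    show b M ∈ _
    rw [← heq]
    exact mem_badSet_left a ha hF hFM
  · have herase : ∀ i ∈ Gs.erase M, i < M := fun i hi =>
      lt_of_le_of_ne (Gs.le_max' i (Finset.mem_of_mem_erase hi)) (Finset.mem_erase.mp hi).1
    have hGdec : ordsum b Gs = ordsum b (Gs.erase M) + b M := by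
      conv_lhs => rw [← Finset.insert_erase hMmem]
      exact ordsum_insert_max b he (Finset.notMem_erase _ _)
        (fun i hi => le_of_lt (herase i hi))
    rw [hGdec] at heq
    have hthis : b M = -(ordsum b (Gs.erase M)) + ordsum b F := by
      rw [heq, neg_add_cancel_left]
    apply hbad
    show b M ∈ _
    rw [hthis]
    exact mem_badSet_right a ha hF hFM he herase
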